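/- For integers y, λ > 0 and prime p, the sum v_p(y) + v_p(y+1) + ... + v_p(y+λ-1) is at most v_p((λ-1)!) + floor(log_p(y+λ)) + min(v_p(y), v_p(λ)). -/

import Mathlib

private lemma asc_pos {y : ℕ} (hy : 0 < y) (k : ℕ) : 0 < y.ascFactorial k := by
  obtain ⟨m, rfl⟩ := Nat.exists_eq_add_of_lt hy
  simpa using Nat.ascFactorial_pos m k

private lemma sum_eq_asc (p y : ℕ) [Fact p.Prime] (hy : 0 < y) :
    ∀ k, ∑ i ∈ Finset.range k, padicValNat p (y + i)
      = padicValNat p (y.ascFactorial k)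
  | 0 => by simp
  | k + 1 => by
    rw [Finset.sum_range_succ, sum_eq_asc p y hy k, Nat.ascFactorial_succ,
      padicValNat.mul (by omega) (asc_pos hy k).ne', Nat.add_comm]

/-- For integers `y, λ > 0` and prime `p`,
`v_p(y) + ⋯ + v_p(y+λ-1) ≤ v_p((λ-1)!) + ⌊log_p(y+λ)⌋ + min(v_p(y), v_p(λ))`.
Here `Nat.log p` is the floor of the base-`p` logarithm. -/
theorem stmt_1 (p y lam : ℕ) (hp : p.Prime) (hy : 0 < y) (hlam : 0 < lam) :
    ∑ i ∈ Finset.range lam, padicValNat p (y + i) ≤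
      padicValNat p (Nat.factorial (lam - 1)) + Nat.log p (y + lam)
        + min (padicValNat p y) (padicValNat p lam) := by
  haveI : Fact p.Prime := ⟨hp⟩
  obtain ⟨m, rfl⟩ : ∃ m, lam = m + 1 := ⟨lam - 1, (Nat.succ_pred_eq_of_pos hlam).symm⟩
  simp only [Nat.add_sub_cancel]
  rw [sum_eq_asc p y hy]
  have hlog : ∀ k, padicValNat p ((y + m).choose k) ≤ Nat.log p (y + (m + 1)) := by
    intro k
    rw [← Nat.factorization_def _ hp]
    exact Nat.factorization_choose_le_log.trans (Nat.log_mono_right (by omega))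
  rw [← min_add_add_left, le_min_iff]
  constructor
  · -- bound via v_p(y): asc = y * (y+1).ascFactorial m = y * (m! * choose (y+m) m)
    have h1 : y.ascFactorial (m + 1) = y * (Nat.factorial m * (y + m).choose m) := by
      rw [← Nat.ascFactorial_eq_factorial_mul_choose, Nat.ascFactorial_succ,
        ← Nat.succ_ascFactorial]
    rw [h1, padicValNat.mul hy.ne' (Nat.mul_pos (Nat.factorial_pos m) (Nat.choose_pos (by omega))).ne', padicValNat.mul
      (Nat.factorial_ne_zero m) (Nat.choose_pos (by omega)).ne']
    have := hlog m
    omega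
  · -- bound via v_p(lam): asc = (m+1)! * choose (y+m) (m+1)
    have h1 : y.ascFactorial (m + 1) = Nat.factorial (m + 1) * (y + m).choose (m + 1) := by
      have := Nat.ascFactorial_eq_factorial_mul_choose' y (m + 1)
      rwa [show y + (m + 1) - 1 = y + m by omega] at this
    rw [h1, padicValNat.mul (Nat.factorial_ne_zero _) (Nat.choose_pos (by omega)).ne',
      Nat.factorial_succ, padicValNat.mul (by omega) (Nat.factorial_ne_zero m)]
    have := hlog (m + 1)
    omega
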